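/- Gallager-type bound, correct-support case: assume M ≥ 2 and let d_min = min_{m≠m'} |u_m − u_{m'}| > 0. Fix naturals 1 ≤ k < N, σ² > 0, and a vector x ∈ X_k^N(U) with support S_x. Let ω ∈ ℝ^N have i.i.d. N(0, σ²/log(N/k)) entries, y = x + ω, and let x̂ : ℝ^N → X_k^N(U) be any measurable function satisfying ‖y − x̂(y)‖₂ ≤ ‖y − x'‖₂ for every y and every x' ∈ X_k^N(U). Then for every w' ∈ {0,…,k}, ℙ( S_{x̂(y)} = S_x and #{ n ∈ S_x : x̂(y)_n ≠ x_n } = w' ) ≤ C(k, w')·(M−1)^{w'}·(N/k)^{−d_min²·w'/(8σ²)}, where C(k,w') is the binomial coefficient. -/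

import Mathlib

open MeasureTheory ProbabilityTheory Real Filter Finset
open scoped ENNReal NNReal Classical

/-- The finite set of vectors indexed by `ι` having exactly `w` nonzero entries,
each nonzero entry lying in the finite set `U`. -/
noncomputable def sparseVecs (U : Finset ℝ) (ι : Type) [Fintype ι] [DecidableEq ι]
    (w : ℕ) : Finset (ι → ℝ) :=
  (Fintype.piFinset fun _ : ι => insert (0 : ℝ) U).filter
    fun x => (Finset.univ.filter fun i => x i ≠ 0).card = w

/-- Uniform probability measure on a finite set. -/
noncomputable def uniformOn {α : Type*} [MeasurableSpace α] (S : Finset α) : Measure α :=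
  (S.card : ℝ≥0∞)⁻¹ • ∑ x ∈ S, Measure.dirac x

lemma my_lintegral_pi_prod {n : ℕ} (μ : Measure ℝ) [SigmaFinite μ] (f : Fin n → ℝ → ℝ≥0∞)
    (hf : ∀ i, Measurable (f i)) :
    ∫⁻ x : Fin n → ℝ, ∏ i, f i (x i) ∂(Measure.pi fun _ => μ) = ∏ i, ∫⁻ x, f i x ∂μ := by
  induction n with
  | zero => simp
  | succ n ih =>
    have h := (measurePreserving_piFinSuccAbove (fun _ : Fin (n+1) => μ) 0).symm
    rw [← h.lintegral_comp_emb (MeasurableEquiv.measurableEmbedding _)]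
    have : ∀ z : ℝ × (Fin n → ℝ),
        ∏ i, f i ((MeasurableEquiv.piFinSuccAbove (fun _ : Fin (n+1) => ℝ) 0).symm z i)
          = f 0 z.1 * ∏ j, f j.succ (z.2 j) := by
      intro z
      simp only [MeasurableEquiv.piFinSuccAbove_symm_apply]
      rw [Fin.prod_univ_succ]
      simp [Fin.insertNth_zero, Fin.zero_succAbove]
    simp_rw [this]
    rw [lintegral_prod_mul (f := f 0) (g := fun y : Fin n → ℝ => ∏ j, f j.succ (y j))
      (hf 0).aemeasurable
      (Finset.measurable_prod _ fun j _ => (hf j.succ).comp (measurable_pi_apply j)).aemeasurable]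
    rw [ih (fun j => f j.succ) (fun j => hf _)]
    rw [Fin.prod_univ_succ]

lemma my_lintegral_exp_gaussian (v : ℝ≥0) (hv : v ≠ 0) (a : ℝ) :
    ∫⁻ x : ℝ, ENNReal.ofReal (Real.exp (a * x)) ∂(gaussianReal 0 v)
      = ENNReal.ofReal (Real.exp (a ^ 2 * v / 2)) := by
  have hvpos : (0:ℝ) < v := lt_of_le_of_ne v.2 (by exact_mod_cast (Ne.symm hv))
  rw [gaussianReal_of_var_ne_zero _ hv,
    lintegral_withDensity_eq_lintegral_mul _ (measurable_gaussianPDF _ _)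
      (by fun_prop)]
  have key : ∀ x : ℝ, gaussianPDF 0 v x * ENNReal.ofReal (Real.exp (a * x))
      = ENNReal.ofReal (Real.exp (a ^ 2 * v / 2)) * gaussianPDF (a * v) v x := by
    intro x
    rw [gaussianPDF, gaussianPDF, ← ENNReal.ofReal_mul (gaussianPDFReal_nonneg _ _ _),
      ← ENNReal.ofReal_mul (Real.exp_nonneg _)]
    congr 1
    simp only [gaussianPDFReal]
    rw [mul_assoc, ← Real.exp_add]
    have hexp : -(x - 0) ^ 2 / (2 * (v:ℝ)) + a * x
        = a ^ 2 * (v:ℝ) / 2 + -(x - a * (v:ℝ)) ^ 2 / (2 * (v:ℝ)) := by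
      field_simp
      ring
    rw [hexp, Real.exp_add]
    ring
  simp only [Pi.mul_apply, key]
  rw [lintegral_const_mul _ (measurable_gaussianPDF _ _), lintegral_gaussianPDF_eq_one _ hv,
    mul_one]

lemma my_chernoff {N : ℕ} (v : ℝ≥0) (hv : v ≠ 0) (c : Fin N → ℝ) :
    (Measure.pi fun _ : Fin N => gaussianReal 0 v)
      {ω : Fin N → ℝ | (∑ i, c i ^ 2) / 2 ≤ ∑ i, c i * ω i}
    ≤ ENNReal.ofReal (Real.exp (-(∑ i, c i ^ 2) / (8 * v))) := by
  have hvpos : (0:ℝ) < v := lt_of_le_of_ne v.2 (by exact_mod_cast (Ne.symm hv))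
  set S := ∑ i, c i ^ 2 with hS
  have hSnn : 0 ≤ S := Finset.sum_nonneg fun i _ => sq_nonneg _
  set lam : ℝ := 1 / (2 * (v:ℝ)) with hlamdef
  have hlam : 0 < lam := by positivity
  -- the exponential moment
  have hmeas : Measurable fun ω : Fin N → ℝ =>
      ENNReal.ofReal (Real.exp (lam * ∑ i, c i * ω i)) := by fun_prop
  have hmoment : ∫⁻ ω, ENNReal.ofReal (Real.exp (lam * ∑ i, c i * ω i))
        ∂(Measure.pi fun _ : Fin N => gaussianReal 0 v)
      = ENNReal.ofReal (Real.exp (lam ^ 2 * S * v / 2)) := by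
    have h1 : ∀ ω : Fin N → ℝ, ENNReal.ofReal (Real.exp (lam * ∑ i, c i * ω i))
        = ∏ i, ENNReal.ofReal (Real.exp ((lam * c i) * ω i)) := by
      intro ω
      rw [← ENNReal.ofReal_prod_of_nonneg (fun i _ => Real.exp_nonneg _), ← Real.exp_sum]
      rw [Finset.mul_sum]
      exact congrArg (fun t => ENNReal.ofReal (Real.exp t))
        (Finset.sum_congr rfl fun i _ => by ring)
    simp_rw [h1]
    rw [my_lintegral_pi_prod (gaussianReal 0 v)
      (fun i t => ENNReal.ofReal (Real.exp ((lam * c i) * t))) (fun i => by fun_prop)]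
    have h2 : ∀ i : Fin N, ∫⁻ x : ℝ, ENNReal.ofReal (Real.exp ((lam * c i) * x))
        ∂(gaussianReal 0 v) = ENNReal.ofReal (Real.exp ((lam * c i) ^ 2 * v / 2)) :=
      fun i => my_lintegral_exp_gaussian v hv _
    rw [Finset.prod_congr rfl fun i _ => h2 i,
      ← ENNReal.ofReal_prod_of_nonneg (fun i _ => Real.exp_nonneg _), ← Real.exp_sum]
    congr 1
    have h3 : ∀ i : Fin N, (lam * c i) ^ 2 * (v:ℝ) / 2
        = (v:ℝ) / 2 * lam ^ 2 * c i ^ 2 := fun i => by ring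
    rw [Finset.sum_congr rfl fun i _ => h3 i, ← Finset.mul_sum, ← hS]
    ring
  -- Markov
  have markov := mul_meas_ge_le_lintegral₀
    (μ := Measure.pi fun _ : Fin N => gaussianReal 0 v) hmeas.aemeasurable
    (ENNReal.ofReal (Real.exp (lam * (S / 2))))
  rw [hmoment] at markov
  have hsub : {ω : Fin N → ℝ | S / 2 ≤ ∑ i, c i * ω i}
      ⊆ {ω : Fin N → ℝ | ENNReal.ofReal (Real.exp (lam * (S / 2)))
          ≤ ENNReal.ofReal (Real.exp (lam * ∑ i, c i * ω i))} := by
    intro ω hω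
    exact ENNReal.ofReal_le_ofReal (Real.exp_le_exp.mpr
      (mul_le_mul_of_nonneg_left hω hlam.le))
  have hμA : (Measure.pi fun _ : Fin N => gaussianReal 0 v)
        {ω : Fin N → ℝ | S / 2 ≤ ∑ i, c i * ω i}
      ≤ ENNReal.ofReal (Real.exp (lam ^ 2 * S * v / 2))
        / ENNReal.ofReal (Real.exp (lam * (S / 2))) := by
    rw [ENNReal.le_div_iff_mul_le (Or.inl (by simp [Real.exp_pos])) (Or.inl ENNReal.ofReal_ne_top)]
    calc (Measure.pi fun _ : Fin N => gaussianReal 0 v)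
            {ω : Fin N → ℝ | S / 2 ≤ ∑ i, c i * ω i}
          * ENNReal.ofReal (Real.exp (lam * (S / 2)))
        ≤ (Measure.pi fun _ : Fin N => gaussianReal 0 v)
            {ω : Fin N → ℝ | ENNReal.ofReal (Real.exp (lam * (S / 2)))
            ≤ ENNReal.ofReal (Real.exp (lam * ∑ i, c i * ω i))}
            * ENNReal.ofReal (Real.exp (lam * (S / 2))) :=
          mul_le_mul_left (measure_mono hsub) _
      _ ≤ ENNReal.ofReal (Real.exp (lam ^ 2 * S * v / 2)) := by rw [mul_comm]; exact markov
  refine hμA.trans ?_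
  rw [← ENNReal.ofReal_div_of_pos (Real.exp_pos _), ← Real.exp_sub]
  apply ENNReal.ofReal_le_ofReal
  apply Real.exp_le_exp.mpr
  have : lam ^ 2 * S * (v:ℝ) / 2 - lam * (S / 2) = -S / (8 * (v:ℝ)) := by
    rw [hlamdef]
    field_simp
    ring
  rw [this]

lemma my_count {N k w' : ℕ} (U : Finset ℝ) (x : Fin N → ℝ)
    (S : Finset (Fin N)) (hS : S.card = k) (hxU : ∀ n ∈ S, x n ∈ U) :
    ((sparseVecs U (Fin N) k).filter fun z =>
      (Finset.univ.filter fun n => z n ≠ 0) = S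
        ∧ (S.filter fun n => z n ≠ x n).card = w').card
    ≤ k.choose w' * (U.card - 1) ^ w' := by
  classical
  set T := (sparseVecs U (Fin N) k).filter fun z =>
      (Finset.univ.filter fun n => z n ≠ 0) = S
        ∧ (S.filter fun n => z n ≠ x n).card = w' with hT
  have hmap : ∀ z ∈ T, (S.filter fun n => z n ≠ x n) ∈ S.powersetCard w' := by
    intro z hz
    rw [Finset.mem_powersetCard]
    exact ⟨Finset.filter_subset _ _, (Finset.mem_filter.mp hz).2.2⟩
  rw [Finset.card_eq_sum_card_fiberwise hmap]
  have hfiber : ∀ D ∈ S.powersetCard w',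
      (T.filter fun z => (S.filter fun n => z n ≠ x n) = D).card ≤ (U.card - 1) ^ w' := by
    intro D hD
    rw [Finset.mem_powersetCard] at hD
    obtain ⟨hDS, hDcard⟩ := hD
    have htarget : (Fintype.piFinset fun n : Fin N =>
        if n ∈ D then U.erase (x n) else {0}).card = (U.card - 1) ^ w' := by
      rw [Fintype.card_piFinset]
      have : ∀ n : Fin N, (if n ∈ D then U.erase (x n) else ({0} : Finset ℝ)).card
          = if n ∈ D then U.card - 1 else 1 := by
        intro n
        by_cases hn : n ∈ D
        · simp [hn, Finset.card_erase_of_mem (hxU n (hDS hn))]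
        · simp [hn]
      simp_rw [this]
      rw [Finset.prod_ite_mem, Finset.univ_inter, Finset.prod_const, hDcard]
    rw [← htarget]
    apply Finset.card_le_card_of_injOn (fun z n => if n ∈ D then z n else 0)
    · intro z hz
      rw [Finset.mem_coe, Finset.mem_filter] at hz
      obtain ⟨hzT, hzD⟩ := hz
      rw [hT, Finset.mem_filter] at hzT
      obtain ⟨hzsp, hzsupp, _⟩ := hzT
      rw [sparseVecs, Finset.mem_filter, Fintype.mem_piFinset] at hzsp
      rw [Finset.mem_coe, Fintype.mem_piFinset]
      intro n
      by_cases hn : n ∈ D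
      · simp only [hn, if_pos]
        have hne : z n ≠ x n := by
          have := hzD ▸ hn
          exact (Finset.mem_filter.mp this).2
        have hnS : n ∈ S := hDS hn
        have hz0 : z n ≠ 0 := by
          have : n ∈ Finset.univ.filter fun m => z m ≠ 0 := hzsupp ▸ hnS
          exact (Finset.mem_filter.mp this).2
        have hzU : z n ∈ U := by
          rcases Finset.mem_insert.mp (hzsp.1 n) with h | h
          · exact absurd h hz0
          · exact h
        exact Finset.mem_erase.mpr ⟨hne, hzU⟩
      · simp [hn]
    · intro z1 h1 z2 h2 heq
      simp only [Finset.coe_filter, Set.mem_setOf_eq] at h1 h2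
      obtain ⟨h1T, h1D⟩ := h1
      obtain ⟨h2T, h2D⟩ := h2
      rw [hT, Finset.mem_filter] at h1T h2T
      funext n
      by_cases hn : n ∈ D
      · have := congrFun heq n
        simpa [hn] using this
      · by_cases hnS : n ∈ S
        · have e1 : z1 n = x n := by
            by_contra hne
            exact hn (h1D ▸ Finset.mem_filter.mpr ⟨hnS, hne⟩)
          have e2 : z2 n = x n := by
            by_contra hne
            exact hn (h2D ▸ Finset.mem_filter.mpr ⟨hnS, hne⟩)
          rw [e1, e2]
        · have e1 : z1 n = 0 := by
            by_contra hne
            exact hnS (h1T.2.1 ▸ Finset.mem_filter.mpr ⟨Finset.mem_univ n, hne⟩)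
          have e2 : z2 n = 0 := by
            by_contra hne
            exact hnS (h2T.2.1 ▸ Finset.mem_filter.mpr ⟨Finset.mem_univ n, hne⟩)
          rw [e1, e2]
  calc ∑ D ∈ S.powersetCard w',
        (T.filter fun z => (S.filter fun n => z n ≠ x n) = D).card
      ≤ ∑ _D ∈ S.powersetCard w', (U.card - 1) ^ w' := Finset.sum_le_sum hfiber
    _ = k.choose w' * (U.card - 1) ^ w' := by
        rw [Finset.sum_const, Finset.card_powersetCard, hS, smul_eq_mul]

theorem gallager_correct_support
    (U : Finset ℝ) (hM : 2 ≤ U.card) (hU0 : ∀ u ∈ U, u ≠ 0)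
    (dmin : ℝ) (hdmin : IsLeast {t : ℝ | ∃ u ∈ U, ∃ v ∈ U, u ≠ v ∧ t = |u - v|} dmin)
    (hdminpos : 0 < dmin)
    (N k : ℕ) (hk : 1 ≤ k) (hkN : k < N) (σ2 : ℝ) (hσ : 0 < σ2)
    (x : Fin N → ℝ) (hx : x ∈ sparseVecs U (Fin N) k)
    (xhat : (Fin N → ℝ) → (Fin N → ℝ)) (hmeas : Measurable xhat)
    (hrange : ∀ y, xhat y ∈ sparseVecs U (Fin N) k)
    (hML : ∀ y : Fin N → ℝ, ∀ x' ∈ sparseVecs U (Fin N) k,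
      ∑ i, (y i - xhat y i) ^ 2 ≤ ∑ i, (y i - x' i) ^ 2)
    (w' : ℕ) (hw' : w' ≤ k) :
    ((Measure.pi fun _ : Fin N =>
        gaussianReal 0 (σ2 / Real.log ((N : ℝ) / (k : ℝ))).toNNReal)
      {ω : Fin N → ℝ |
        (Finset.univ.filter fun n => xhat (x + ω) n ≠ 0)
          = (Finset.univ.filter fun n => x n ≠ 0) ∧
        ((Finset.univ.filter fun n => x n ≠ 0).filter
          fun n => xhat (x + ω) n ≠ x n).card = w'}).toReal
    ≤ (k.choose w' : ℝ) * ((U.card : ℝ) - 1) ^ w'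
        * ((N : ℝ) / (k : ℝ)) ^ (-(dmin ^ 2 * (w' : ℝ)) / (8 * σ2)) := by
  classical
  have hk0 : (0:ℝ) < k := by exact_mod_cast hk
  have hNk1 : (1:ℝ) < (N:ℝ)/(k:ℝ) := (one_lt_div hk0).mpr (by exact_mod_cast hkN)
  set L := Real.log ((N:ℝ)/(k:ℝ)) with hLdef
  have hL : 0 < L := Real.log_pos hNk1
  set v : ℝ≥0 := (σ2 / L).toNNReal with hvdef
  have hvco : (v:ℝ) = σ2 / L := Real.coe_toNNReal _ (div_pos hσ hL).le
  have hv0 : v ≠ 0 := by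
    intro h
    have h2 : (v:ℝ) = 0 := by rw [h]; simp
    rw [hvco] at h2
    exact absurd h2 (div_pos hσ hL).ne'
  set S := Finset.univ.filter fun n : Fin N => x n ≠ 0 with hSdef
  have hxmem := hx
  rw [sparseVecs, Finset.mem_filter, Fintype.mem_piFinset] at hxmem
  obtain ⟨hxU', hScard⟩ := hxmem
  have hxU : ∀ n ∈ S, x n ∈ U := by
    intro n hn
    have h0 : x n ≠ 0 := (Finset.mem_filter.mp hn).2
    rcases Finset.mem_insert.mp (hxU' n) with h | h
    · exact absurd h h0
    · exact h
  set T := (sparseVecs U (Fin N) k).filter fun z =>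
      (Finset.univ.filter fun n => z n ≠ 0) = S
        ∧ (S.filter fun n => z n ≠ x n).card = w' with hT
  -- event inclusion
  have hincl : {ω : Fin N → ℝ |
        (Finset.univ.filter fun n => xhat (x + ω) n ≠ 0) = S ∧
        (S.filter fun n => xhat (x + ω) n ≠ x n).card = w'}
      ⊆ ⋃ z ∈ T, {ω : Fin N → ℝ |
          (∑ i, (z i - x i) ^ 2) / 2 ≤ ∑ i, (z i - x i) * ω i} := by
    intro ω hω
    obtain ⟨hsupp, hcard⟩ := hω
    refine Set.mem_iUnion₂.mpr ⟨xhat (x + ω), ?_, ?_⟩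
    · rw [hT, Finset.mem_filter]
      exact ⟨hrange _, hsupp, hcard⟩
    · have hml := hML (x + ω) x hx
      have hexp1 : ∀ i, ((x + ω) i - xhat (x + ω) i) ^ 2
          = (ω i) ^ 2 - 2 * ((xhat (x + ω) i - x i) * ω i) + (xhat (x + ω) i - x i) ^ 2 := by
        intro i; simp only [Pi.add_apply]; ring
      have hexp2 : ∀ i, ((x + ω) i - x i) ^ 2 = (ω i) ^ 2 := by
        intro i; simp only [Pi.add_apply]; ring
      rw [Finset.sum_congr rfl fun i _ => hexp1 i,
        Finset.sum_congr rfl fun i _ => hexp2 i] at hml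
      rw [Finset.sum_add_distrib, Finset.sum_sub_distrib, ← Finset.mul_sum] at hml
      simp only [Set.mem_setOf_eq]
      linarith
  -- gap bound
  have hgap : ∀ z ∈ T, (w' : ℝ) * dmin ^ 2 ≤ ∑ i, (z i - x i) ^ 2 := by
    intro z hz
    rw [hT, Finset.mem_filter] at hz
    obtain ⟨hzsp, hzsupp, hzD⟩ := hz
    have hzU : ∀ n ∈ S, z n ∈ U := by
      intro n hn
      have hz0 : z n ≠ 0 := by
        have : n ∈ Finset.univ.filter fun m => z m ≠ 0 := hzsupp ▸ hn
        exact (Finset.mem_filter.mp this).2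
      rw [sparseVecs, Finset.mem_filter, Fintype.mem_piFinset] at hzsp
      rcases Finset.mem_insert.mp (hzsp.1 n) with h | h
      · exact absurd h hz0
      · exact h
    calc (w' : ℝ) * dmin ^ 2
        = ∑ _i ∈ S.filter fun n => z n ≠ x n, dmin ^ 2 := by
          rw [Finset.sum_const, hzD, nsmul_eq_mul]
      _ ≤ ∑ i ∈ S.filter fun n => z n ≠ x n, (z i - x i) ^ 2 := by
          apply Finset.sum_le_sum
          intro i hi
          obtain ⟨hiS, hine⟩ := Finset.mem_filter.mp hi
          have hle : dmin ≤ |z i - x i| :=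
            hdmin.2 ⟨z i, hzU i hiS, x i, hxU i hiS, hine, rfl⟩
          calc dmin ^ 2 ≤ |z i - x i| ^ 2 := pow_le_pow_left₀ hdminpos.le hle 2
            _ = (z i - x i) ^ 2 := sq_abs _
      _ ≤ ∑ i, (z i - x i) ^ 2 :=
          Finset.sum_le_sum_of_subset_of_nonneg (Finset.subset_univ _)
            (fun i _ _ => sq_nonneg _)
  -- per-element measure bound
  set B : ℝ := Real.exp (-((w' : ℝ) * dmin ^ 2) / (8 * (v:ℝ))) with hBdef
  have hbound : ∀ z ∈ T,
      (Measure.pi fun _ : Fin N => gaussianReal 0 v)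
        {ω : Fin N → ℝ | (∑ i, (z i - x i) ^ 2) / 2 ≤ ∑ i, (z i - x i) * ω i}
      ≤ ENNReal.ofReal B := by
    intro z hz
    refine (my_chernoff v hv0 (fun i => z i - x i)).trans ?_
    apply ENNReal.ofReal_le_ofReal
    apply Real.exp_le_exp.mpr
    have h8v : (0:ℝ) < 8 * (v:ℝ) := by
      have : (0:ℝ) < v := lt_of_le_of_ne v.2 (by exact_mod_cast (Ne.symm hv0))
      linarith
    exact (div_le_div_iff_of_pos_right h8v).mpr (neg_le_neg (hgap z hz))
  -- combine
  have hcount : T.card ≤ k.choose w' * (U.card - 1) ^ w' :=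
    my_count U x S hScard hxU
  have hBnn : 0 ≤ B := Real.exp_nonneg _
  have main : (Measure.pi fun _ : Fin N => gaussianReal 0 v)
      {ω : Fin N → ℝ |
        (Finset.univ.filter fun n => xhat (x + ω) n ≠ 0) = S ∧
        (S.filter fun n => xhat (x + ω) n ≠ x n).card = w'}
      ≤ ENNReal.ofReal ((k.choose w' * (U.card - 1) ^ w' : ℕ) * B) := by
    refine le_trans (measure_mono hincl) ?_
    refine le_trans (measure_biUnion_finset_le _ _) ?_
    calc ∑ z ∈ T, (Measure.pi fun _ : Fin N => gaussianReal 0 v)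
            {ω : Fin N → ℝ |
              (∑ i, (z i - x i) ^ 2) / 2 ≤ ∑ i, (z i - x i) * ω i}
        ≤ ∑ _z ∈ T, ENNReal.ofReal B := Finset.sum_le_sum hbound
      _ = (T.card : ℝ≥0∞) * ENNReal.ofReal B := by
          rw [Finset.sum_const, nsmul_eq_mul]
      _ ≤ ((k.choose w' * (U.card - 1) ^ w' : ℕ) : ℝ≥0∞) * ENNReal.ofReal B :=
          mul_le_mul_left (by exact_mod_cast hcount) _
      _ = ENNReal.ofReal ((k.choose w' * (U.card - 1) ^ w' : ℕ) * B) := by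
          rw [ENNReal.ofReal_mul (Nat.cast_nonneg _), ENNReal.ofReal_natCast]
  -- final conversion
  have hRHSeq : ((k.choose w' * (U.card - 1) ^ w' : ℕ) : ℝ) * B
      = (k.choose w' : ℝ) * ((U.card : ℝ) - 1) ^ w'
        * ((N : ℝ) / (k : ℝ)) ^ (-(dmin ^ 2 * (w' : ℝ)) / (8 * σ2)) := by
    have hcast : ((k.choose w' * (U.card - 1) ^ w' : ℕ) : ℝ)
        = (k.choose w' : ℝ) * ((U.card : ℝ) - 1) ^ w' := by
      push_cast [Nat.cast_sub (le_trans one_le_two hM)]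
      ring
    have hBeq : B = ((N : ℝ) / (k : ℝ)) ^ (-(dmin ^ 2 * (w' : ℝ)) / (8 * σ2)) := by
      rw [hBdef, Real.rpow_def_of_pos (lt_trans one_pos hNk1), ← hLdef, hvco]
      congr 1
      field_simp
    rw [hcast, hBeq]
  refine ENNReal.toReal_le_of_le_ofReal ?_ ?_
  · rw [← hRHSeq]
    exact mul_nonneg (Nat.cast_nonneg _) hBnn
  · rw [← hRHSeq]
    exact main
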